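/- Let K and K̃ be real symmetric positive semidefinite n×n matrices with K - K̃ positive semidefinite and ‖K - K̃‖ ≤ M·λ_{k+1}(K) for some M ≥ 0, and let β > 0. Then, with S = (K̃ + βI)^{-1/2}(K + βI)(K̃ + βI)^{-1/2}, one has I ≤ S ≤ I + M·λ_{k+1}(K)·(K̃ + βI)^{-1} in the Loewner order. -/

import Mathlib

open scoped Matrix.Norms.L2Operator
open Matrix

noncomputable def Matrix.PosSemidef.sqrt {n 𝕜 : Type*} [Fintype n] [DecidableEq n] [RCLike 𝕜]
    [PartialOrder 𝕜]     {A : Matrix n n 𝕜} (hA : A.PosSemidef) : Matrix n n 𝕜 :=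
  hA.1.eigenvectorUnitary.1 * diagonal ((↑) ∘ (√·) ∘ hA.1.eigenvalues) *
    (star hA.1.eigenvectorUnitary : Matrix n n 𝕜)

lemma Matrix.PosSemidef.posSemidef_sqrt {n : ℕ} {A : Matrix (Fin n) (Fin n) ℝ}
    (hA : A.PosSemidef) : hA.sqrt.PosSemidef := by
  unfold Matrix.PosSemidef.sqrt
  have hd : (diagonal (((↑) : ℝ → ℝ) ∘ (√·) ∘ hA.1.eigenvalues)).PosSemidef :=
    PosSemidef.diagonal fun i => by simp [Real.sqrt_nonneg]
  have := hd.mul_mul_conjTranspose_same (hA.1.eigenvectorUnitary : Matrix (Fin n) (Fin n) ℝ)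
  exact this

lemma Matrix.PosSemidef.sqrt_mul_self {n : ℕ} {A : Matrix (Fin n) (Fin n) ℝ}
    (hA : A.PosSemidef) : hA.sqrt * hA.sqrt = A := by
  unfold Matrix.PosSemidef.sqrt
  set U := hA.1.eigenvectorUnitary
  have hU : star (U : Matrix (Fin n) (Fin n) ℝ) * U = 1 := Unitary.star_mul_self_of_mem U.2
  conv_rhs => rw [hA.1.spectral_theorem]
  rw [Unitary.conjStarAlgAut_apply]
  calc (U : Matrix (Fin n) (Fin n) ℝ) * diagonal (((↑) : ℝ → ℝ) ∘ (√·) ∘ hA.1.eigenvalues) * star (U : Matrix (Fin n) (Fin n) ℝ)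
        * ((U : Matrix (Fin n) (Fin n) ℝ) * diagonal (((↑) : ℝ → ℝ) ∘ (√·) ∘ hA.1.eigenvalues) * star (U : Matrix (Fin n) (Fin n) ℝ))
      = U * (diagonal (((↑) : ℝ → ℝ) ∘ (√·) ∘ hA.1.eigenvalues) * (star (U : Matrix (Fin n) (Fin n) ℝ) * U) *
          diagonal (((↑) : ℝ → ℝ) ∘ (√·) ∘ hA.1.eigenvalues)) * star (U : Matrix (Fin n) (Fin n) ℝ) := by
        simp only [Matrix.mul_assoc]
    _ = _ := by
        rw [hU, Matrix.mul_one, diagonal_mul_diagonal]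
        congr 3
        ext i
        simp [Real.mul_self_sqrt (hA.eigenvalues_nonneg i)]

lemma smul_one_sub_psd {n : ℕ} (D : Matrix (Fin n) (Fin n) ℝ)
    (hD : D.IsHermitian) (c : ℝ) (hc : ‖D‖ ≤ c) :
    (c • (1 : Matrix (Fin n) (Fin n) ℝ) - D).PosSemidef := by
  refine Matrix.PosSemidef.of_dotProduct_mulVec_nonneg ?_ ?_
  · have h1 : (c • (1 : Matrix (Fin n) (Fin n) ℝ)).IsHermitian := by
      unfold Matrix.IsHermitian
      rw [Matrix.conjTranspose_smul, star_trivial, Matrix.conjTranspose_one]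
    exact h1.sub hD
  · intro x
    have hsx : star x = x := by simp
    set x' : EuclideanSpace ℝ (Fin n) := (EuclideanSpace.equiv (Fin n) ℝ).symm x with hx'
    have h1 : x ⬝ᵥ (D *ᵥ x) =
        inner ℝ x' ((EuclideanSpace.equiv (Fin n) ℝ).symm (D *ᵥ x)) := by
      rw [EuclideanSpace.inner_eq_star_dotProduct]
      simp [x', dotProduct_comm]
    have h2 := real_inner_le_norm x' ((EuclideanSpace.equiv (Fin n) ℝ).symm (D *ᵥ x))
    have h3 : ‖(EuclideanSpace.equiv (Fin n) ℝ).symm (D *ᵥ x)‖ ≤ ‖D‖ * ‖x'‖ :=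
      D.l2_opNorm_mulVec x'
    have h4 : x ⬝ᵥ x = inner ℝ x' x' := by
      rw [EuclideanSpace.inner_eq_star_dotProduct]
      simp [x']
    have h5 : (inner ℝ x' x' : ℝ) = ‖x'‖ * ‖x'‖ := real_inner_self_eq_norm_mul_norm x'
    have hxn : (0:ℝ) ≤ ‖x'‖ := norm_nonneg _
    have hDn : (0:ℝ) ≤ ‖D‖ := norm_nonneg _
    have key : x ⬝ᵥ (D *ᵥ x) ≤ c * (x ⬝ᵥ x) := by
      rw [h1, h4, h5]
      nlinarith [h2, h3]
    rw [hsx, sub_mulVec, dotProduct_sub, smul_mulVec, one_mulVec, dotProduct_smul]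
    simpa using key

/-- If `K, K̃` are real symmetric PSD with `K - K̃` PSD,
`‖K - K̃‖ ≤ M λ_{k+1}(K)` and `β > 0`, then with
`S = (K̃ + βI)^{-1/2} (K + βI) (K̃ + βI)^{-1/2}` one has
`I ≤ S ≤ I + M λ_{k+1}(K) (K̃ + βI)⁻¹` in the Loewner order. -/
theorem stmt4 {n k : ℕ} (hk : k < n)
    (K Kt : Matrix (Fin n) (Fin n) ℝ)
    (hK : K.PosSemidef) (hKt : Kt.PosSemidef)
    (hdiff : (K - Kt).PosSemidef)
    (M : ℝ) (hM : 0 ≤ M)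
    (μ : Fin n → ℝ) (hμanti : Antitone μ)
    (hμ : ∃ e : Equiv.Perm (Fin n), ∀ i, μ i = hK.isHermitian.eigenvalues (e i))
    (hnorm : ‖K - Kt‖ ≤ M * μ ⟨k, hk⟩)
    (β : ℝ) (hβ : 0 < β)
    (h₁ : (Kt + β • (1 : Matrix (Fin n) (Fin n) ℝ)).PosSemidef)
    (S : Matrix (Fin n) (Fin n) ℝ)
    (hS : S = h₁.sqrt⁻¹ * (K + β • (1 : Matrix (Fin n) (Fin n) ℝ)) * h₁.sqrt⁻¹) :
    (S - 1).PosSemidef ∧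
    ((1 + (M * μ ⟨k, hk⟩) • (Kt + β • (1 : Matrix (Fin n) (Fin n) ℝ))⁻¹) - S).PosSemidef := by
  have hApd : (Kt + β • (1 : Matrix (Fin n) (Fin n) ℝ)).PosDef := by
    refine Matrix.PosDef.posSemidef_add hKt ?_
    rw [Matrix.smul_one_eq_diagonal]
    exact Matrix.posDef_diagonal_iff.mpr fun _ => hβ
  set R := h₁.sqrt⁻¹ with hR
  have hQpsd := h₁.posSemidef_sqrt
  have hsq : h₁.sqrt * h₁.sqrt = Kt + β • (1 : Matrix (Fin n) (Fin n) ℝ) := h₁.sqrt_mul_self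
  have hdet : IsUnit h₁.sqrt.det := by
    have : h₁.sqrt.det * h₁.sqrt.det = (Kt + β • (1 : Matrix (Fin n) (Fin n) ℝ)).det := by
      rw [← det_mul, hsq]
    have hpos := hApd.det_pos
    refine isUnit_iff_ne_zero.mpr fun h0 => ?_
    rw [h0, mul_zero] at this
    exact hpos.ne' this.symm
  have hunit : IsUnit h₁.sqrt := (Matrix.isUnit_iff_isUnit_det _).mpr hdet
  have hinv : R * h₁.sqrt = 1 := Matrix.nonsing_inv_mul _ hdet
  have hinv' : h₁.sqrt * R = 1 := Matrix.mul_nonsing_inv _ hdet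
  have hRH : R.IsHermitian := hQpsd.isHermitian.inv
  have hRAR : R * (Kt + β • (1 : Matrix (Fin n) (Fin n) ℝ)) * R = 1 := by
    rw [← hsq, ← Matrix.mul_assoc, hinv, Matrix.one_mul, hinv']
  have hRR : R * R = (Kt + β • (1 : Matrix (Fin n) (Fin n) ℝ))⁻¹ := by
    rw [hR, ← Matrix.mul_inv_rev, hsq]
  have hexp1 : R * (K + β • (1 : Matrix (Fin n) (Fin n) ℝ)) * R
      - R * (Kt + β • (1 : Matrix (Fin n) (Fin n) ℝ)) * R = R * (K - Kt) * R := by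
    simp only [Matrix.mul_sub, Matrix.sub_mul, Matrix.mul_add, Matrix.add_mul]
    abel
  have h1' : S - 1 = R * (K - Kt) * R := by
    rw [hS, ← hexp1, hRAR]
  have hfst : (S - 1).PosSemidef := by
    have h := hdiff.mul_mul_conjTranspose_same R
    rw [hRH.eq] at h
    rw [h1']; exact h
  refine ⟨hfst, ?_⟩
  set c := M * μ ⟨k, hk⟩ with hc
  have hexp2 : R * (c • (1 : Matrix (Fin n) (Fin n) ℝ) - (K - Kt)) * R
      = c • (R * R) - R * (K - Kt) * R := by
    simp only [Matrix.mul_sub, Matrix.sub_mul, Matrix.mul_smul, Matrix.smul_mul,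
      Matrix.mul_one, Matrix.one_mul]
  have h2' : (1 + c • (Kt + β • (1 : Matrix (Fin n) (Fin n) ℝ))⁻¹) - S
      = R * (c • (1 : Matrix (Fin n) (Fin n) ℝ) - (K - Kt)) * R := by
    rw [hexp2, hRR, ← h1']
    abel
  have h := (smul_one_sub_psd (K - Kt) hdiff.isHermitian c hnorm).mul_mul_conjTranspose_same R
  rw [hRH.eq] at h
  rw [h2']; exact h
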